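/- Let T be a finite tree with diameter at least 3 and maximum degree Δ ≥ 3, and let h, p ≥ 1 be integers with h ≥ Δ·p. Then T admits an elegant C(h,p,p)-labelling with span 2h + Δp − 1; consequently 2h + (Δ − 1)·p ≤ σ_{h,p,p}(T) ≤ σ*_{h,p,p}(T) ≤ 2h + Δp − 1. -/

import Mathlib

open SimpleGraph

/-- An `L(h,p,p)`-labelling of `G` with span `ℓ`: labels in `{0,…,ℓ}`, labels of vertices at
distance 1 differ by at least `h`, labels of vertices at distance 2 or 3 differ by at least `p`. -/
def IsLLabelling {V : Type} (G : SimpleGraph V) (h p ℓ : ℕ) (f : V → ℕ) : Prop :=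
  (∀ v, f v ≤ ℓ) ∧
  (∀ u v, G.dist u v = 1 → (h : ℤ) ≤ |(f u : ℤ) - (f v : ℤ)|) ∧
  (∀ u v, G.dist u v = 2 ∨ G.dist u v = 3 → (p : ℤ) ≤ |(f u : ℤ) - (f v : ℤ)|)

/-- `λ_{h,p,p}(G)`: the minimum span of an `L(h,p,p)`-labelling of `G`. -/
noncomputable def lambdaNum {V : Type} (G : SimpleGraph V) (h p : ℕ) : ℕ :=
  sInf {ℓ : ℕ | ∃ f : V → ℕ, IsLLabelling G h p ℓ f}

/-- A circular interval modulo `n`: a set of residues of the form `{a, a+1, …, a+s}` mod `n`. -/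
def IsCircInterval (n : ℕ) (I : Set (ZMod n)) : Prop :=
  ∃ (a : ZMod n) (s : ℕ), I = {x : ZMod n | ∃ i : ℕ, i ≤ s ∧ x = a + (i : ZMod n)}

/-- An elegant `L(h,p,p)`-labelling: additionally each vertex `u` has a circular interval `I u`
modulo `ℓ+1` containing the labels of all neighbours of `u`, with `I u ∩ I v = ∅` for edges `uv`. -/
def IsElegantLLabelling {V : Type} (G : SimpleGraph V) (h p ℓ : ℕ) (f : V → ℕ) : Prop :=
  IsLLabelling G h p ℓ f ∧
  ∃ I : V → Set (ZMod (ℓ + 1)),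
    (∀ u, IsCircInterval (ℓ + 1) (I u)) ∧
    (∀ u w, G.Adj u w → ((f w : ZMod (ℓ + 1)) ∈ I u)) ∧
    (∀ u v, G.Adj u v → I u ∩ I v = ∅)

/-- `λ*_{h,p,p}(G)`: the minimum span of an elegant `L(h,p,p)`-labelling of `G`. -/
noncomputable def lambdaStar {V : Type} (G : SimpleGraph V) (h p : ℕ) : ℕ :=
  sInf {ℓ : ℕ | ∃ f : V → ℕ, IsElegantLLabelling G h p ℓ f}

/-- The `ℓ`-cyclic distance between labels `a` and `b`. -/
def cycDist (ℓ a b : ℕ) : ℤ :=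
  min |(a : ℤ) - (b : ℤ)| ((ℓ : ℤ) - |(a : ℤ) - (b : ℤ)|)

/-- A `C(h,p,p)`-labelling of `G` with span `ℓ`: labels in `{0,…,ℓ-1}`, and the `ℓ`-cyclic distance
between labels of vertices at distance 1 (resp. 2 or 3) is at least `h` (resp. `p`). -/
def IsCLabelling {V : Type} (G : SimpleGraph V) (h p ℓ : ℕ) (f : V → ℕ) : Prop :=
  (∀ v, f v < ℓ) ∧
  (∀ u v, G.dist u v = 1 → (h : ℤ) ≤ cycDist ℓ (f u) (f v)) ∧
  (∀ u v, G.dist u v = 2 ∨ G.dist u v = 3 → (p : ℤ) ≤ cycDist ℓ (f u) (f v))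

/-- `σ_{h,p,p}(G)`: the minimum positive `ℓ` such that `G` has a `C(h,p,p)`-labelling of span `ℓ`. -/
noncomputable def sigmaNum {V : Type} (G : SimpleGraph V) (h p : ℕ) : ℕ :=
  sInf {ℓ : ℕ | 0 < ℓ ∧ ∃ f : V → ℕ, IsCLabelling G h p ℓ f}

/-- An elegant `C(h,p,p)`-labelling: additionally each vertex `u` has a circular interval `I u`
modulo `ℓ` containing the labels of all neighbours of `u`, with `I u ∩ I v = ∅` for edges `uv`. -/
def IsElegantCLabelling {V : Type} (G : SimpleGraph V) (h p ℓ : ℕ) (f : V → ℕ) : Prop :=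
  IsCLabelling G h p ℓ f ∧
  ∃ I : V → Set (ZMod ℓ),
    (∀ u, IsCircInterval ℓ (I u)) ∧
    (∀ u w, G.Adj u w → ((f w : ZMod ℓ) ∈ I u)) ∧
    (∀ u v, G.Adj u v → I u ∩ I v = ∅)

/-- `σ*_{h,p,p}(G)`: the minimum positive `ℓ` such that `G` has an elegant `C(h,p,p)`-labelling
of span `ℓ`. -/
noncomputable def sigmaStar {V : Type} (G : SimpleGraph V) (h p : ℕ) : ℕ :=
  sInf {ℓ : ℕ | 0 < ℓ ∧ ∃ f : V → ℕ, IsElegantCLabelling G h p ℓ f}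

/-- `Δ₂(G) = max over edges uv of (deg u + deg v)`. -/
noncomputable def deltaTwo {V : Type} (G : SimpleGraph V) [Fintype V] [DecidableRel G.Adj] : ℕ :=
  sSup {d : ℕ | ∃ u v : V, G.Adj u v ∧ d = G.degree u + G.degree v}


namespace Stmt10Aux



variable {V : Type} {G : SimpleGraph V}

lemma path_length (hT : G.IsTree) {a b : V} {P : G.Walk a b} (hP : P.IsPath) :
    P.length = G.dist a b := by
  obtain ⟨Q, hQ, hQl⟩ := hT.isConnected.exists_path_of_dist a b
  have := isAcyclic_iff_path_unique.mp hT.IsAcyclic ⟨P, hP⟩ ⟨Q, hQ⟩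
  have : P = Q := congrArg Subtype.val this
  rw [this, hQl]

lemma level_adj (hT : G.IsTree) (root : V) {u v : V} (huv : G.Adj u v) :
    G.dist root u + 1 = G.dist root v ∨ G.dist root v + 1 = G.dist root u := by
  classical
  obtain ⟨P, hP, hPl⟩ := hT.isConnected.exists_path_of_dist v root
  by_cases hu : u ∈ P.support
  · left
    have h1 : (P.takeUntil u hu).length = G.dist v u := path_length hT (hP.takeUntil hu)
    have h2 : (P.dropUntil u hu).length = G.dist u root := path_length hT (hP.dropUntil hu)
    have h3 : (P.takeUntil u hu).length + (P.dropUntil u hu).length = P.length := by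
      rw [← Walk.length_append, P.take_spec hu]
    have h4 : G.dist v u = 1 := by rw [dist_comm]; exact dist_eq_one_iff_adj.mpr huv
    have h5 : G.dist root u = G.dist u root := dist_comm
    have h6 : G.dist root v = G.dist v root := dist_comm
    omega
  · right
    have hQ : (Walk.cons huv P).IsPath := (Walk.cons_isPath_iff _ _).mpr ⟨hP, hu⟩
    have h1 : (Walk.cons huv P).length = G.dist u root := path_length hT hQ
    have h2 : (Walk.cons huv P).length = P.length + 1 := Walk.length_cons _ _
    have h5 : G.dist root u = G.dist u root := dist_comm
    have h6 : G.dist root v = G.dist v root := dist_comm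
    omega

lemma parent_unique (hT : G.IsTree) (root : V) {u u' v : V} (h1 : G.Adj u v) (h2 : G.Adj u' v)
    (l1 : G.dist root u + 1 = G.dist root v) (l2 : G.dist root u' + 1 = G.dist root v) :
    u = u' := by
  classical
  obtain ⟨P, hP, hPl⟩ := hT.isConnected.exists_path_of_dist u root
  obtain ⟨P', hP', hPl'⟩ := hT.isConnected.exists_path_of_dist u' root
  have hv : v ∉ P.support := by
    intro hv
    have ht1 := path_length hT (hP.takeUntil hv)
    have ht2 := path_length hT (hP.dropUntil hv)
    have h3 : (P.takeUntil v hv).length + (P.dropUntil v hv).length = P.length := by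
      rw [← Walk.length_append, P.take_spec hv]
    have h4 : G.dist u v = 1 := dist_eq_one_iff_adj.mpr h1
    have h5 : G.dist root u = G.dist u root := dist_comm
    have h6 : G.dist root v = G.dist v root := dist_comm
    omega
  have hv' : v ∉ P'.support := by
    intro hv'
    have ht1 := path_length hT (hP'.takeUntil hv')
    have ht2 := path_length hT (hP'.dropUntil hv')
    have h3 : (P'.takeUntil v hv').length + (P'.dropUntil v hv').length = P'.length := by
      rw [← Walk.length_append, P'.take_spec hv']
    have h4 : G.dist u' v = 1 := dist_eq_one_iff_adj.mpr h2
    have h5 : G.dist root u' = G.dist u' root := dist_comm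
    have h6 : G.dist root v = G.dist v root := dist_comm
    omega
  have hQ : (Walk.cons h1.symm P).IsPath := (Walk.cons_isPath_iff _ _).mpr ⟨hP, hv⟩
  have hQ' : (Walk.cons h2.symm P').IsPath := (Walk.cons_isPath_iff _ _).mpr ⟨hP', hv'⟩
  have := isAcyclic_iff_path_unique.mp hT.IsAcyclic ⟨Walk.cons h1.symm P, hQ⟩
      ⟨Walk.cons h2.symm P', hQ'⟩
  have heq : Walk.cons h1.symm P = Walk.cons h2.symm P' := congrArg Subtype.val this
  have g1 : (Walk.cons h1.symm P).getVert 1 = u := by simp [Walk.getVert_cons_succ]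
  have g2 : (Walk.cons h2.symm P').getVert 1 = u' := by simp [Walk.getVert_cons_succ]
  rw [heq] at g1
  rw [g1] at g2
  exact g2

lemma exists_parent (hT : G.IsTree) (root : V) {v : V} (hv : v ≠ root) :
    ∃ u, G.Adj u v ∧ G.dist root u + 1 = G.dist root v := by
  have hd : G.dist v root ≠ 0 :=
    dist_ne_zero_iff_ne_and_reachable.mpr ⟨hv, hT.isConnected.preconnected v root⟩
  obtain ⟨P, hP, hPl⟩ := hT.isConnected.exists_path_of_dist v root
  cases P with
  | nil => simp at hd
  | cons hadj Q =>
    rename_i w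
    refine ⟨w, hadj.symm, ?_⟩
    have h1 : Q.length = G.dist w root := path_length hT hP.of_cons
    have h2 : (Walk.cons hadj Q).length = Q.length + 1 := Walk.length_cons _ _
    have h5 : G.dist root w = G.dist w root := dist_comm
    have h6 : G.dist root v = G.dist v root := dist_comm
    omega

variable (G)

open scoped Classical in
/-- the chosen parent of `v` in the tree rooted at `root`. -/
noncomputable def parent (root v : V) : V :=
  if hv : ∃ u, G.Adj u v ∧ G.dist root u + 1 = G.dist root v then Classical.choose hv else v

lemma parent_spec (hT : G.IsTree) (root : V) {v : V} (hv : v ≠ root) :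
    G.Adj (parent G root v) v ∧ G.dist root (parent G root v) + 1 = G.dist root v := by
  rw [parent, dif_pos (exists_parent hT root hv)]
  exact Classical.choose_spec (exists_parent hT root hv)

open scoped Classical in
/-- children of `u` in the rooted tree. -/
noncomputable def children [Fintype V] (root u : V) : Finset V :=
  (G.neighborFinset u).filter (fun w => G.dist root u + 1 = G.dist root w)

open scoped Classical in
/-- choose an injective colouring of the children of `u` avoiding colour `c`. -/
noncomputable def chooseInj [Fintype V] (Δc : ℕ) (root u : V) (c : ℕ) : V → ℕ :=
  if hg : ∃ g : V → ℕ, Set.InjOn g (children G root u : Set V) ∧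
      ∀ w ∈ children G root u, g w ∈ (Finset.range Δc).erase c then
    Classical.choose hg
  else fun _ => 0

lemma chooseInj_exists [Fintype V] {Δc : ℕ} {root u : V} {c : ℕ}
    (hcard : (children G root u).card ≤ ((Finset.range Δc).erase c).card) :
    ∃ g : V → ℕ, Set.InjOn g (children G root u : Set V) ∧
      ∀ w ∈ children G root u, g w ∈ (Finset.range Δc).erase c := by
  classical
  have hfin : (children G root u : Set V).Finite := (children G root u).finite_toSet
  have hle : (children G root u : Set V).encard ≤
      (((Finset.range Δc).erase c : Finset ℕ) : Set ℕ).encard := by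
    rw [Set.encard_coe_eq_coe_finsetCard, Set.encard_coe_eq_coe_finsetCard]
    exact_mod_cast hcard
  obtain ⟨g, hg1, hg2⟩ := hfin.exists_injOn_of_encard_le hle
  refine ⟨g, hg2, fun w hw => ?_⟩
  have := hg1 (by exact_mod_cast hw : w ∈ (children G root u : Set V))
  simp only [Set.mem_preimage] at this
  exact_mod_cast this

lemma chooseInj_spec [Fintype V] {Δc : ℕ} {root u : V} {c : ℕ}
    (hcard : (children G root u).card ≤ ((Finset.range Δc).erase c).card) :
    Set.InjOn (chooseInj G Δc root u c) (children G root u : Set V) ∧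
      ∀ w ∈ children G root u, chooseInj G Δc root u c w ∈ (Finset.range Δc).erase c := by
  rw [chooseInj, dif_pos (chooseInj_exists G hcard)]
  exact Classical.choose_spec (chooseInj_exists G hcard)

open scoped Classical in
/-- colouring by fuel recursion on the level. -/
noncomputable def colF [Fintype V] (Δc : ℕ) (root : V) : ℕ → V → ℕ
  | 0, _ => Δc
  | n + 1, v =>
    if v = root then Δc
    else chooseInj G Δc root (parent G root v) (colF Δc root n (parent G root v)) v

/-- the colour of a vertex. -/
noncomputable def col [Fintype V] (Δc : ℕ) (root v : V) : ℕ :=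
  colF G Δc root (G.dist root v) v

lemma col_root [Fintype V] (Δc : ℕ) (root : V) : col G Δc root root = Δc := by
  rw [col, dist_self]; rfl

lemma col_eq [Fintype V] (hT : G.IsTree) (Δc : ℕ) {root v : V} (hv : v ≠ root) :
    col G Δc root v =
      chooseInj G Δc root (parent G root v) (col G Δc root (parent G root v)) v := by
  obtain ⟨hadj, hlev⟩ := parent_spec G hT root hv
  rw [col, ← hlev]
  show colF G Δc root (G.dist root (parent G root v) + 1) v = _
  rw [colF, if_neg hv, col]

variable {G}

lemma mem_children [Fintype V] {root u w : V} :
    w ∈ children G root u ↔ G.Adj u w ∧ G.dist root u + 1 = G.dist root w := by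
  classical
  rw [children]
  simp [mem_neighborFinset]

/-- for non-root `v`, `v` is a child of its parent. -/
lemma mem_children_parent [Fintype V] (hT : G.IsTree) {root v : V} (hv : v ≠ root) :
    v ∈ children G root (parent G root v) := by
  obtain ⟨hadj, hlev⟩ := parent_spec G hT root hv
  exact mem_children.mpr ⟨hadj, hlev⟩

lemma not_mem_children_parent [Fintype V] (hT : G.IsTree) {root u : V} (hu : u ≠ root) :
    parent G root u ∉ children G root u := by
  obtain ⟨hadj, hlev⟩ := parent_spec G hT root hu
  intro hmem
  have := (mem_children.mp hmem).2
  omega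

lemma children_card_le [Fintype V] [DecidableRel G.Adj] (hT : G.IsTree) {Δc : ℕ} (root : V)
    (hdeg : ∀ x : V, G.degree x ≤ Δc) (u : V) :
    (children G root u).card ≤ ((Finset.range Δc).erase (col G Δc root u)).card := by
  classical
  by_cases hu : u = root
  · rw [hu]
    have h1 : children G root root ⊆ G.neighborFinset root := by
      intro w hw
      exact (mem_neighborFinset G root w).mpr (mem_children.mp hw).1
    have h2 := Finset.card_le_card h1
    rw [card_neighborFinset_eq_degree] at h2
    have h4 : (Finset.range Δc).erase (col G Δc root root) = Finset.range Δc := by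
      rw [col_root]
      exact Finset.erase_eq_of_notMem (by simp)
    rw [h4, Finset.card_range]
    exact le_trans h2 (hdeg root)
  · obtain ⟨hadj, hlev⟩ := parent_spec G hT root hu
    have h1 : children G root u ⊆ (G.neighborFinset u).erase (parent G root u) := by
      intro w hw
      rw [Finset.mem_erase]
      refine ⟨?_, (mem_neighborFinset G u w).mpr (mem_children.mp hw).1⟩
      intro hwp
      subst hwp
      exact not_mem_children_parent hT hu hw
    have h2 := Finset.card_le_card h1
    rw [Finset.card_erase_of_mem ((mem_neighborFinset G u _).mpr hadj.symm),
      card_neighborFinset_eq_degree] at h2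
    have h3 : Δc - 1 ≤ ((Finset.range Δc).erase (col G Δc root u)).card := by
      have := Finset.pred_card_le_card_erase (s := Finset.range Δc) (a := col G Δc root u)
      simpa using this
    have h5 := hdeg u
    omega

lemma col_mem [Fintype V] [DecidableRel G.Adj] (hT : G.IsTree) {Δc : ℕ} (root : V)
    (hdeg : ∀ x : V, G.degree x ≤ Δc) {v : V} (hv : v ≠ root) :
    col G Δc root v ∈
      (Finset.range Δc).erase (col G Δc root (parent G root v)) := by
  have hspec := chooseInj_spec G (children_card_le hT root hdeg (parent G root v))
    (c := col G Δc root (parent G root v))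
  rw [col_eq G hT Δc hv]
  exact hspec.2 v (mem_children_parent hT hv)

lemma col_lt [Fintype V] [DecidableRel G.Adj] (hT : G.IsTree) {Δc : ℕ} (root : V)
    (hdeg : ∀ x : V, G.degree x ≤ Δc) {v : V} (hv : v ≠ root) :
    col G Δc root v < Δc :=
  Finset.mem_range.mp (Finset.mem_of_mem_erase (col_mem hT root hdeg hv))

lemma col_ne_parent [Fintype V] [DecidableRel G.Adj] (hT : G.IsTree) {Δc : ℕ} (root : V)
    (hdeg : ∀ x : V, G.degree x ≤ Δc) {v : V} (hv : v ≠ root) :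
    col G Δc root v ≠ col G Δc root (parent G root v) :=
  Finset.ne_of_mem_erase (col_mem hT root hdeg hv)

lemma ne_root_of_mem_children [Fintype V] {root u v : V}
    (hv : v ∈ children G root u) : v ≠ root := by
  intro hvr
  subst hvr
  have := (mem_children.mp hv).2
  rw [dist_self] at this
  omega

lemma parent_eq_of_mem_children [Fintype V] (hT : G.IsTree) {root u v : V}
    (hv : v ∈ children G root u) : parent G root v = u := by
  obtain ⟨hadj, hlev⟩ := mem_children.mp hv
  obtain ⟨hadj', hlev'⟩ := parent_spec G hT root (ne_root_of_mem_children hv)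
  exact parent_unique hT root hadj' hadj (by omega) (by omega)

lemma col_sibling [Fintype V] [DecidableRel G.Adj] (hT : G.IsTree) {Δc : ℕ} (root : V)
    (hdeg : ∀ x : V, G.degree x ≤ Δc) {u v w : V} (hv : v ∈ children G root u)
    (hw : w ∈ children G root u) (hvw : v ≠ w) :
    col G Δc root v ≠ col G Δc root w := by
  have hspec := chooseInj_spec G (children_card_le hT root hdeg u) (c := col G Δc root u)
  have hpv := parent_eq_of_mem_children hT hv
  have hpw := parent_eq_of_mem_children hT hw
  rw [col_eq G hT Δc (ne_root_of_mem_children hv), hpv,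
    col_eq G hT Δc (ne_root_of_mem_children hw), hpw]
  intro heq
  exact hvw (hspec.1 (by exact_mod_cast hv) (by exact_mod_cast hw) heq)

lemma cycDist_comm (L a b : ℕ) : cycDist L a b = cycDist L b a := by
  simp [cycDist, abs_sub_comm]

lemma cycDist_ge {L : ℕ} [NeZero L] (a b : ZMod L) (c t : ℤ)
    (hab : a - b = (c : ZMod L)) (h1 : t ≤ c) (h2 : c ≤ (L : ℤ) - t) (ht : 0 < t) :
    t ≤ cycDist L a.val b.val := by
  have hL : 0 < (L : ℤ) := by exact_mod_cast NeZero.pos L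
  have hA : (a.val : ℤ) < L := by exact_mod_cast a.val_lt
  have hB : (b.val : ℤ) < L := by exact_mod_cast b.val_lt
  have hA0 : (0:ℤ) ≤ (a.val : ℤ) := by positivity
  have hB0 : (0:ℤ) ≤ (b.val : ℤ) := by positivity
  have e1 : ((a.val : ℕ) : ZMod L) = a := by rw [ZMod.natCast_val, ZMod.cast_id]
  have e2 : ((b.val : ℕ) : ZMod L) = b := by rw [ZMod.natCast_val, ZMod.cast_id]
  have hcast : (((a.val : ℤ) - (b.val : ℤ) : ℤ) : ZMod L) = ((c : ℤ) : ZMod L) := by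
    rw [Int.cast_sub, Int.cast_natCast, Int.cast_natCast, e1, e2]
    exact hab
  have hmod := (ZMod.intCast_eq_intCast_iff _ _ _).mp hcast
  have hdvd : (L : ℤ) ∣ (c - ((a.val : ℤ) - (b.val : ℤ))) := Int.ModEq.dvd hmod
  obtain ⟨k, hk⟩ := hdvd
  have hk1 : (L:ℤ) * k < L * 2 := by nlinarith
  have hk2 : (L:ℤ) * (-2) < L * k := by nlinarith
  have hk1' : k < 2 := lt_of_mul_lt_mul_left hk1 (le_of_lt hL)
  have hk2' : -2 < k := lt_of_mul_lt_mul_left hk2 (le_of_lt hL)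
  have hk0 : k = 0 ∨ k = 1 ∨ k = -1 := by omega
  have hcd : cycDist L a.val b.val
      = min |(a.val : ℤ) - (b.val : ℤ)| ((L : ℤ) - |(a.val : ℤ) - (b.val : ℤ)|) := rfl
  rw [hcd, le_min_iff]
  rcases abs_cases ((a.val : ℤ) - (b.val : ℤ)) with ⟨he, hp⟩ | ⟨he, hp⟩ <;>
    rw [he] <;> constructor <;> rcases hk0 with rfl | rfl | rfl <;> omega

lemma cycDist_ge' {L : ℕ} [NeZero L] (a b : ZMod L) (c t : ℤ)
    (hab : a - b = (c : ZMod L) ∨ a - b = -(c : ZMod L))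
    (h1 : t ≤ c) (h2 : c ≤ (L : ℤ) - t) (ht : 0 < t) :
    t ≤ cycDist L a.val b.val := by
  have hz : ((L : ℤ) : ZMod L) = 0 := by
    have := ZMod.natCast_self L
    exact_mod_cast this
  rcases hab with hab | hab
  · exact cycDist_ge a b c t hab h1 h2 ht
  · refine cycDist_ge a b ((L : ℤ) - c) t ?_ (by omega) (by omega) ht
    rw [hab]
    push_cast [ZMod.natCast_self]
    ring

variable (G)

/-- sign of a vertex: `+1` at even levels, `-1` at odd levels. -/
noncomputable def sgn (L : ℕ) (root u : V) : ZMod L :=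
  if Even (G.dist root u) then 1 else -1

open scoped Classical in
/-- the labelling, by fuel recursion on the level. -/
noncomputable def fF [Fintype V] (L hh pp Δc : ℕ) (root : V) : ℕ → V → ZMod L
  | 0, _ => 0
  | n + 1, v =>
    if v = root then 0
    else fF L hh pp Δc root n (parent G root v) + sgn G L root (parent G root v) *
      ((hh : ZMod L) + (pp : ZMod L) * (col G Δc root v : ZMod L))

/-- the label of a vertex, as an element of `ZMod L`. -/
noncomputable def fLab [Fintype V] (L hh pp Δc : ℕ) (root v : V) : ZMod L :=
  fF G L hh pp Δc root (G.dist root v) v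

/-- the offset index of the edge `uv` seen from `u`. -/
noncomputable def offs [Fintype V] (Δc : ℕ) (root u v : V) : ℕ :=
  if G.dist root v = G.dist root u + 1 then col G Δc root v else col G Δc root u

lemma fLab_eq [Fintype V] (hT : G.IsTree) (L hh pp Δc : ℕ) {root v : V} (hv : v ≠ root) :
    fLab G L hh pp Δc root v = fLab G L hh pp Δc root (parent G root v) +
      sgn G L root (parent G root v) *
        ((hh : ZMod L) + (pp : ZMod L) * (col G Δc root v : ZMod L)) := by
  obtain ⟨hadj, hlev⟩ := parent_spec G hT root hv
  rw [fLab, ← hlev]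
  show fF G L hh pp Δc root (G.dist root (parent G root v) + 1) v = _
  rw [fF, if_neg hv, fLab]

lemma sgn_adj (hT : G.IsTree) (L : ℕ) (root : V) {u v : V} (huv : G.Adj u v) :
    sgn G L root v = - sgn G L root u := by
  rcases level_adj hT root huv with hl | hl
  · by_cases he : Even (G.dist root u)
    · have hv : ¬ Even (G.dist root v) := by
        rw [← hl]; simp [Nat.even_add_one, he]
      simp [sgn, he, hv]
    · have hv : Even (G.dist root v) := by
        rw [← hl]; simp [Nat.even_add_one, he]
      simp [sgn, he, hv]
  · by_cases he : Even (G.dist root v)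
    · have hu : ¬ Even (G.dist root u) := by
        rw [← hl]; simp [Nat.even_add_one, he]
      simp [sgn, he, hu]
    · have hu : Even (G.dist root u) := by
        rw [← hl]; simp [Nat.even_add_one, he]
      simp [sgn, he, hu]

lemma sgn_cases (L : ℕ) (root u : V) :
    sgn G L root u = 1 ∨ sgn G L root u = -1 := by
  rw [sgn]
  split <;> simp

lemma adj_rel [Fintype V] [DecidableRel G.Adj] (hT : G.IsTree) (L hh pp : ℕ) {Δc : ℕ}
    (root : V) (hdeg : ∀ x : V, G.degree x ≤ Δc) {u v : V} (huv : G.Adj u v) :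
    fLab G L hh pp Δc root v = fLab G L hh pp Δc root u + sgn G L root u *
      ((hh : ZMod L) + (pp : ZMod L) * (offs G Δc root u v : ZMod L)) ∧
      offs G Δc root u v < Δc := by
  rcases level_adj hT root huv with hl | hl
  · -- v is a child of u
    have hvroot : v ≠ root := by
      intro hvr; subst hvr; rw [dist_self] at hl; omega
    obtain ⟨hadj', hlev'⟩ := parent_spec G hT root hvroot
    have hpar : parent G root v = u := parent_unique hT root hadj' huv hlev' hl
    have hoffs : offs G Δc root u v = col G Δc root v := if_pos (by omega)
    refine ⟨?_, by rw [hoffs]; exact col_lt hT root hdeg hvroot⟩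
    rw [hoffs, ← hpar]
    exact fLab_eq G hT L hh pp Δc hvroot
  · -- u is a child of v
    have huroot : u ≠ root := by
      intro hur; subst hur; rw [dist_self] at hl; omega
    obtain ⟨hadj', hlev'⟩ := parent_spec G hT root huroot
    have hpar : parent G root u = v := parent_unique hT root hadj' huv.symm hlev' hl
    have hoffs : offs G Δc root u v = col G Δc root u := if_neg (by omega)
    have hrel := fLab_eq G hT L hh pp Δc huroot
    rw [hpar] at hrel
    have hs : sgn G L root v = - sgn G L root u := sgn_adj G hT L root huv
    rw [hs] at hrel
    refine ⟨?_, by rw [hoffs]; exact col_lt hT root hdeg huroot⟩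
    rw [hoffs]
    linear_combination (-1 : ZMod L) * hrel

lemma offs_ne [Fintype V] [DecidableRel G.Adj] (hT : G.IsTree) {Δc : ℕ} (root : V)
    (hdeg : ∀ x : V, G.degree x ≤ Δc) {u v w : V} (hv : G.Adj u v) (hw : G.Adj u w)
    (hvw : v ≠ w) : offs G Δc root u v ≠ offs G Δc root u w := by
  rcases level_adj hT root hv with hl1 | hl1 <;> rcases level_adj hT root hw with hl2 | hl2
  · -- both children
    rw [offs, if_pos (by omega), offs, if_pos (by omega)]
    exact col_sibling hT root hdeg (mem_children.mpr ⟨hv, hl1⟩) (mem_children.mpr ⟨hw, hl2⟩) hvw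
  · -- v child, w parent-side
    have huroot : u ≠ root := by
      intro hur; subst hur; rw [dist_self] at hl2; omega
    have hvroot : v ≠ root := by
      intro hvr; subst hvr; rw [dist_self] at hl1; omega
    rw [offs, if_pos (by omega), offs, if_neg (by omega)]
    have hpar : parent G root v = u :=
      parent_eq_of_mem_children hT (mem_children.mpr ⟨hv, hl1⟩)
    have := col_ne_parent hT root hdeg hvroot
    rwa [hpar] at this
  · -- w child, v parent-side
    have hwroot : w ≠ root := by
      intro hwr; subst hwr; rw [dist_self] at hl2; omega
    rw [offs, if_neg (by omega), offs, if_pos (by omega)]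
    have hpar : parent G root w = u :=
      parent_eq_of_mem_children hT (mem_children.mpr ⟨hw, hl2⟩)
    have := col_ne_parent hT root hdeg hwroot
    rw [hpar] at this
    exact (Ne.symm this)
  · -- both parent-side: impossible
    exact absurd (parent_unique hT root hv.symm hw.symm (by omega) (by omega)) hvw

variable {G}

lemma val_cast_self {L : ℕ} [NeZero L] (a : ZMod L) : ((a.val : ℕ) : ZMod L) = a := by
  rw [ZMod.natCast_val, ZMod.cast_id]

section Keys

variable [Fintype V] [DecidableRel G.Adj] (hT : G.IsTree) {L h p Δc : ℕ} [NeZero L]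
  (root : V) (hdeg : ∀ x : V, G.degree x ≤ Δc)
  (hL : (L : ℤ) = 2 * h + Δc * p - 1) (hph : Δc * p ≤ h) (hp : 1 ≤ p)

include hT hdeg hL hph hp

lemma key1 {u v : V} (huv : G.Adj u v) :
    (h : ℤ) ≤ cycDist L (fLab G L h p Δc root u).val (fLab G L h p Δc root v).val := by
  obtain ⟨hrel, hk⟩ := adj_rel G hT L h p root hdeg huv
  set k := offs G Δc root u v with hkdef
  have hkz : (k : ℤ) ≤ (Δc : ℤ) - 1 := by omega
  have hpk : (p : ℤ) * k ≤ (p : ℤ) * ((Δc : ℤ) - 1) :=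
    mul_le_mul_of_nonneg_left hkz (by positivity)
  have hpk0 : (0 : ℤ) ≤ (p : ℤ) * k := by positivity
  have hphz : (Δc : ℤ) * p ≤ (h : ℤ) := by exact_mod_cast hph
  have hpz : (1 : ℤ) ≤ (p : ℤ) := by exact_mod_cast hp
  have hcX : (((h : ℤ) + p * k : ℤ) : ZMod L) =
      (h : ZMod L) + (p : ZMod L) * (k : ZMod L) := by push_cast; ring
  have hab : fLab G L h p Δc root u - fLab G L h p Δc root v
        = (((h : ℤ) + p * k : ℤ) : ZMod L) ∨
      fLab G L h p Δc root u - fLab G L h p Δc root v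
        = -(((h : ℤ) + p * k : ℤ) : ZMod L) := by
    rcases sgn_cases G L root u with hs | hs <;> rw [hs] at hrel
    · right; rw [hcX]; linear_combination -hrel
    · left; rw [hcX]; linear_combination -hrel
  refine cycDist_ge' _ _ _ _ hab (by nlinarith) (by nlinarith) (by nlinarith)

lemma key2 {a u v : V} (hu : G.Adj a u) (hv : G.Adj a v) (huv : u ≠ v) :
    (p : ℤ) ≤ cycDist L (fLab G L h p Δc root u).val (fLab G L h p Δc root v).val := by
  obtain ⟨hrel1, hk1⟩ := adj_rel G hT L h p root hdeg hu
  obtain ⟨hrel2, hk2⟩ := adj_rel G hT L h p root hdeg hv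
  have hne := offs_ne G hT root hdeg hu hv huv
  set k1 := offs G Δc root a u
  set k2 := offs G Δc root a v
  have hphz : (Δc : ℤ) * p ≤ (h : ℤ) := by exact_mod_cast hph
  have hpz : (1 : ℤ) ≤ (p : ℤ) := by exact_mod_cast hp
  have hk1z : (k1 : ℤ) ≤ (Δc : ℤ) - 1 := by omega
  have hk2z : (k2 : ℤ) ≤ (Δc : ℤ) - 1 := by omega
  have hk10 : (0 : ℤ) ≤ (k1 : ℤ) := by positivity
  have hk20 : (0 : ℤ) ≤ (k2 : ℤ) := by positivity
  rcases Nat.lt_or_ge k1 k2 with hlt | hge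
  · have hltz : (k1 : ℤ) + 1 ≤ (k2 : ℤ) := by exact_mod_cast hlt
    have hcX : (((p : ℤ) * ((k2 : ℤ) - k1) : ℤ) : ZMod L) =
        (p : ZMod L) * (k2 : ZMod L) - (p : ZMod L) * (k1 : ZMod L) := by push_cast; ring
    have hab : fLab G L h p Δc root u - fLab G L h p Δc root v
          = (((p : ℤ) * ((k2 : ℤ) - k1) : ℤ) : ZMod L) ∨
        fLab G L h p Δc root u - fLab G L h p Δc root v
          = -(((p : ℤ) * ((k2 : ℤ) - k1) : ℤ) : ZMod L) := by
      rcases sgn_cases G L root a with hs | hs <;> rw [hs] at hrel1 hrel2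
      · right; rw [hcX]; linear_combination hrel1 - hrel2
      · left; rw [hcX]; linear_combination hrel1 - hrel2
    refine cycDist_ge' _ _ _ _ hab (by nlinarith) (by nlinarith) (by nlinarith)
  · have hgt : k2 < k1 := lt_of_le_of_ne hge (Ne.symm hne)
    have hltz : (k2 : ℤ) + 1 ≤ (k1 : ℤ) := by exact_mod_cast hgt
    have hcX : (((p : ℤ) * ((k1 : ℤ) - k2) : ℤ) : ZMod L) =
        (p : ZMod L) * (k1 : ZMod L) - (p : ZMod L) * (k2 : ZMod L) := by push_cast; ring
    have hab : fLab G L h p Δc root u - fLab G L h p Δc root v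
          = (((p : ℤ) * ((k1 : ℤ) - k2) : ℤ) : ZMod L) ∨
        fLab G L h p Δc root u - fLab G L h p Δc root v
          = -(((p : ℤ) * ((k1 : ℤ) - k2) : ℤ) : ZMod L) := by
      rcases sgn_cases G L root a with hs | hs <;> rw [hs] at hrel1 hrel2
      · left; rw [hcX]; linear_combination hrel1 - hrel2
      · right; rw [hcX]; linear_combination hrel1 - hrel2
    refine cycDist_ge' _ _ _ _ hab (by nlinarith) (by nlinarith) (by nlinarith)

lemma key3 {u a b v : V} (h1 : G.Adj a u) (h2 : G.Adj a b) (h3 : G.Adj b v) :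
    (p : ℤ) ≤ cycDist L (fLab G L h p Δc root u).val (fLab G L h p Δc root v).val := by
  obtain ⟨hrel1, hk1⟩ := adj_rel G hT L h p root hdeg h1
  obtain ⟨hrel2, hk2⟩ := adj_rel G hT L h p root hdeg h2
  obtain ⟨hrel3, hk3⟩ := adj_rel G hT L h p root hdeg h3
  have hsb : sgn G L root b = - sgn G L root a := sgn_adj G hT L root h2
  rw [hsb] at hrel3
  set k1 := offs G Δc root a u
  set k2 := offs G Δc root a b
  set k3 := offs G Δc root b v
  have hphz : (Δc : ℤ) * p ≤ (h : ℤ) := by exact_mod_cast hph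
  have hpz : (1 : ℤ) ≤ (p : ℤ) := by exact_mod_cast hp
  have hk1z : (k1 : ℤ) ≤ (Δc : ℤ) - 1 := by omega
  have hk2z : (k2 : ℤ) ≤ (Δc : ℤ) - 1 := by omega
  have hk3z : (k3 : ℤ) ≤ (Δc : ℤ) - 1 := by omega
  have hk10 : (0 : ℤ) ≤ (k1 : ℤ) := by positivity
  have hk20 : (0 : ℤ) ≤ (k2 : ℤ) := by positivity
  have hk30 : (0 : ℤ) ≤ (k3 : ℤ) := by positivity
  have hcX : (((h : ℤ) + p * k1 + p * k3 - p * k2 : ℤ) : ZMod L) =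
      (h : ZMod L) + (p : ZMod L) * (k1 : ZMod L) + (p : ZMod L) * (k3 : ZMod L)
        - (p : ZMod L) * (k2 : ZMod L) := by push_cast; ring
  have hab : fLab G L h p Δc root u - fLab G L h p Δc root v
        = (((h : ℤ) + p * k1 + p * k3 - p * k2 : ℤ) : ZMod L) ∨
      fLab G L h p Δc root u - fLab G L h p Δc root v
        = -(((h : ℤ) + p * k1 + p * k3 - p * k2 : ℤ) : ZMod L) := by
    rcases sgn_cases G L root a with hs | hs <;> rw [hs] at hrel1 hrel2 hrel3
    · left; rw [hcX]; linear_combination hrel1 - hrel2 - hrel3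
    · right; rw [hcX]; linear_combination hrel1 - hrel2 - hrel3
  refine cycDist_ge' _ _ _ _ hab (by nlinarith) (by nlinarith) (by nlinarith)

end Keys

lemma parity_adj [Fintype V] (hT : G.IsTree) (root : V) {u v : V} (huv : G.Adj u v)
    (he : Even (G.dist root u)) : ¬ Even (G.dist root v) := by
  rcases level_adj hT root huv with hl | hl
  · rw [← hl, Nat.even_add_one]
    exact not_not_intro he
  · rw [← hl, Nat.even_add_one] at he
    exact he

lemma exists_elegant {V : Type} [Fintype V] (G : SimpleGraph V) [DecidableRel G.Adj]
    (hT : G.IsTree) (hne : Nonempty V) (h p : ℕ) (hp : 1 ≤ p) (hD : 3 ≤ G.maxDegree)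
    (hph : G.maxDegree * p ≤ h) :
    ∃ f : V → ℕ, IsElegantCLabelling G h p (2 * h + G.maxDegree * p - 1) f := by
  classical
  set Δc := G.maxDegree with hΔ
  set L := 2 * h + Δc * p - 1 with hLdef
  have hDp : 3 ≤ Δc * p := by
    calc 3 ≤ Δc := hD
    _ = Δc * 1 := by ring
    _ ≤ Δc * p := Nat.mul_le_mul_left _ hp
  have hh3 : 3 ≤ h := le_trans hDp hph
  have hL1 : 1 ≤ 2 * h + Δc * p := by omega
  haveI : NeZero L := ⟨by omega⟩
  have hL : (L : ℤ) = 2 * h + Δc * p - 1 := by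
    rw [hLdef, Nat.cast_sub hL1]; push_cast; ring
  obtain ⟨root⟩ := hne
  have hdeg : ∀ x : V, G.degree x ≤ Δc := fun x => G.degree_le_maxDegree x
  have hphz : (Δc : ℤ) * p ≤ (h : ℤ) := by exact_mod_cast hph
  have hpz : (1 : ℤ) ≤ (p : ℤ) := by exact_mod_cast hp
  set s' := Δc * p - 1 with hs'def
  have hs'z : (s' : ℤ) = (Δc : ℤ) * p - 1 := by
    rw [hs'def, Nat.cast_sub (by omega)]; push_cast; ring
  refine ⟨fun v => (fLab G L h p Δc root v).val,
    ⟨fun v => ZMod.val_lt _, ?_, ?_⟩,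
    fun u => {x : ZMod L | ∃ i : ℕ, i ≤ s' ∧ x = (if Even (G.dist root u) then
        fLab G L h p Δc root u + (h : ZMod L)
      else fLab G L h p Δc root u - (h : ZMod L) - ((s' : ℕ) : ZMod L)) + (i : ZMod L)},
    fun u => ⟨_, s', rfl⟩, ?_, ?_⟩
  · -- distance 1
    intro u v hd
    exact key1 hT root hdeg hL hph hp (dist_eq_one_iff_adj.mp hd)
  · -- distance 2 or 3
    intro u v hd
    rcases hd with hd | hd
    · obtain ⟨W, hWl⟩ := SimpleGraph.exists_walk_of_dist_ne_zero (by omega : G.dist u v ≠ 0)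
      rw [hd] at hWl
      cases W with
      | nil => simp only [Walk.length_nil] at hWl; omega
      | cons h1 W1 => cases W1 with
        | nil => simp only [Walk.length_cons, Walk.length_nil] at hWl; omega
        | cons h2 W2 => cases W2 with
          | cons h3 W3 =>
            simp only [Walk.length_cons, Walk.length_nil] at hWl; omega
          | nil =>
            have huv : u ≠ v := by
              intro he; rw [he, SimpleGraph.dist_self] at hd; omega
            exact key2 hT root hdeg hL hph hp h1.symm h2 huv
    · obtain ⟨W, hWl⟩ := SimpleGraph.exists_walk_of_dist_ne_zero (by omega : G.dist u v ≠ 0)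
      rw [hd] at hWl
      cases W with
      | nil => simp only [Walk.length_nil] at hWl; omega
      | cons h1 W1 => cases W1 with
        | nil => simp only [Walk.length_cons, Walk.length_nil] at hWl; omega
        | cons h2 W2 => cases W2 with
          | nil => simp only [Walk.length_cons, Walk.length_nil] at hWl; omega
          | cons h3 W3 => cases W3 with
            | cons h4 W4 =>
              simp only [Walk.length_cons, Walk.length_nil] at hWl; omega
            | nil => exact key3 hT root hdeg hL hph hp h1.symm h2 h3
  · -- membership of neighbours
    intro u w huw
    obtain ⟨hrel, hk⟩ := adj_rel G hT L h p root hdeg huw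
    set k := offs G Δc root u w with hkdef
    have hpk1 : p * k + p ≤ Δc * p := by
      have hk1 : k + 1 ≤ Δc := hk
      calc p * k + p = p * (k + 1) := by ring
      _ ≤ p * Δc := Nat.mul_le_mul_left _ hk1
      _ = Δc * p := Nat.mul_comm _ _
  
    have hvc : ((( fLab G L h p Δc root w).val : ℕ) : ZMod L) = fLab G L h p Δc root w :=
      val_cast_self _
    by_cases he : Even (G.dist root u)
    · have hs : sgn G L root u = 1 := by rw [sgn, if_pos he]
      rw [hs] at hrel
      refine ⟨p * k, by omega, ?_⟩
      rw [if_pos he, hvc]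
      push_cast
      linear_combination hrel
    · have hs : sgn G L root u = -1 := by rw [sgn, if_neg he]
      rw [hs] at hrel
      refine ⟨s' - p * k, by omega, ?_⟩
      rw [if_neg he, hvc, Nat.cast_sub (by omega : p * k ≤ s')]
      push_cast
      linear_combination hrel
  · -- disjointness
    intro u v huv
    have main : ∀ a b : V, G.Adj a b → Even (G.dist root a) → ¬ Even (G.dist root b) →
        {x : ZMod L | ∃ i : ℕ, i ≤ s' ∧ x = (if Even (G.dist root a) then
            fLab G L h p Δc root a + (h : ZMod L)
          else fLab G L h p Δc root a - (h : ZMod L) - ((s' : ℕ) : ZMod L)) + (i : ZMod L)} ∩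
        {x : ZMod L | ∃ j : ℕ, j ≤ s' ∧ x = (if Even (G.dist root b) then
            fLab G L h p Δc root b + (h : ZMod L)
          else fLab G L h p Δc root b - (h : ZMod L) - ((s' : ℕ) : ZMod L)) + (j : ZMod L)} =
          ∅ := by
      intro a b hab hea heb
      rw [Set.eq_empty_iff_forall_notMem]
      rintro x ⟨⟨i, hi, hxi⟩, ⟨j, hj, hxj⟩⟩
      rw [if_pos hea] at hxi
      rw [if_neg heb] at hxj
      obtain ⟨hrel, hk⟩ := adj_rel G hT L h p root hdeg hab
      have hs : sgn G L root a = 1 := by rw [sgn, if_pos hea]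
      rw [hs] at hrel
      set k := offs G Δc root a b with hkdef
      have hpk1 : p * k + p ≤ Δc * p := by
        have hk1 : k + 1 ≤ Δc := hk
        calc p * k + p = p * (k + 1) := by ring
        _ ≤ p * Δc := Nat.mul_le_mul_left _ hk1
        _ = Δc * p := Nat.mul_comm _ _
      have heq : fLab G L h p Δc root a + (h : ZMod L) + (i : ZMod L)
          = fLab G L h p Δc root b - (h : ZMod L) - ((s' : ℕ) : ZMod L) + (j : ZMod L) := by
        rw [← hxi, ← hxj]
      set cz : ℤ := (h : ℤ) + i - p * k + s' - j with hczdef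
      have hcz : ((cz : ℤ) : ZMod L) = 0 := by
        rw [hczdef]
        push_cast
        linear_combination heq + hrel
      have hdvd : (L : ℤ) ∣ cz := (ZMod.intCast_zmod_eq_zero_iff_dvd _ _).mp hcz
      have hiz : (i : ℤ) ≤ (s' : ℤ) := by exact_mod_cast hi
      have hjz : (j : ℤ) ≤ (s' : ℤ) := by exact_mod_cast hj
      have hpkz : (p : ℤ) * k + p ≤ (Δc : ℤ) * p := by exact_mod_cast hpk1
      have hi0 : (0:ℤ) ≤ (i:ℤ) := by positivity
      have hj0 : (0:ℤ) ≤ (j:ℤ) := by positivity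
      have hpk0 : (0:ℤ) ≤ (p:ℤ) * k := by positivity
      have hcpos : 0 < cz := by
        rw [hczdef]
        linarith
      have hclt : cz < L := by
        rw [hczdef]
        linarith
      have := Int.le_of_dvd hcpos hdvd
      omega
    by_cases he : Even (G.dist root u)
    · exact main u v huv he (parity_adj hT root huv he)
    · have hev : Even (G.dist root v) := by
        rcases level_adj hT root huv with hl | hl
        · rw [← hl, Nat.even_add_one]
          exact he
        · by_contra hno
          exact he (by rw [← hl]; exact Nat.even_add_one.mpr hno)
      rw [Set.inter_comm]
      exact main v u huv.symm hev he

lemma window {ℓ : ℕ} (hl : 0 < ℓ) {A B : ℕ} (hA : A < ℓ) (hB : B < ℓ) {t : ℤ}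
    (ht : t ≤ cycDist ℓ A B) :
    t ≤ ((B : ℤ) - (A : ℤ)) % (ℓ : ℤ) ∧ ((B : ℤ) - (A : ℤ)) % (ℓ : ℤ) ≤ (ℓ : ℤ) - t := by
  have hlz : (0 : ℤ) < (ℓ : ℤ) := by exact_mod_cast hl
  have hcd : cycDist ℓ A B = min |(A : ℤ) - (B : ℤ)| ((ℓ : ℤ) - |(A : ℤ) - (B : ℤ)|) := rfl
  rw [hcd, le_min_iff] at ht
  obtain ⟨ht1, ht2⟩ := ht
  set r := ((B : ℤ) - (A : ℤ)) % (ℓ : ℤ) with hrdef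
  have hr0 : 0 ≤ r := Int.emod_nonneg _ (by omega)
  have hrlt : r < ℓ := Int.emod_lt_of_pos _ hlz
  have he := Int.mul_ediv_add_emod ((B : ℤ) - (A : ℤ)) (ℓ : ℤ)
  rw [← hrdef] at he
  set q := ((B : ℤ) - (A : ℤ)) / (ℓ : ℤ) with hqdef
  have hq1 : (ℓ : ℤ) * q < (ℓ : ℤ) * 1 := by
    rcases abs_cases ((A : ℤ) - (B : ℤ)) with ⟨habs, _⟩ | ⟨habs, _⟩ <;> omega
  have hq2 : (ℓ : ℤ) * (-2) < (ℓ : ℤ) * q := by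
    rcases abs_cases ((A : ℤ) - (B : ℤ)) with ⟨habs, _⟩ | ⟨habs, _⟩ <;> omega
  have hq1' : q < 1 := lt_of_mul_lt_mul_left hq1 (le_of_lt hlz)
  have hq2' : -2 < q := lt_of_mul_lt_mul_left hq2 (le_of_lt hlz)
  have hq0 : q = 0 ∨ q = -1 := by omega
  rcases abs_cases ((A : ℤ) - (B : ℤ)) with ⟨habs, _⟩ | ⟨habs, _⟩ <;>
    rw [habs] at ht1 ht2 <;> rcases hq0 with hq | hq <;> rw [hq] at he <;>
    constructor <;> omega

lemma pair_sep {ℓ : ℕ} (hl : 0 < ℓ) {A B C : ℕ} (hA : A < ℓ) (hB : B < ℓ) (hC : C < ℓ)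
    {t : ℤ} (ht : t ≤ cycDist ℓ A B) :
    t ≤ |((A : ℤ) - (C : ℤ)) % (ℓ : ℤ) - ((B : ℤ) - (C : ℤ)) % (ℓ : ℤ)| := by
  have hlz : (0 : ℤ) < (ℓ : ℤ) := by exact_mod_cast hl
  have hcd : cycDist ℓ A B = min |(A : ℤ) - (B : ℤ)| ((ℓ : ℤ) - |(A : ℤ) - (B : ℤ)|) := rfl
  rw [hcd, le_min_iff] at ht
  obtain ⟨ht1, ht2⟩ := ht
  set X := ((A : ℤ) - (C : ℤ)) % (ℓ : ℤ) with hXdef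
  set Y := ((B : ℤ) - (C : ℤ)) % (ℓ : ℤ) with hYdef
  have hX0 : 0 ≤ X := Int.emod_nonneg _ (by omega)
  have hXlt : X < ℓ := Int.emod_lt_of_pos _ hlz
  have hY0 : 0 ≤ Y := Int.emod_nonneg _ (by omega)
  have hYlt : Y < ℓ := Int.emod_lt_of_pos _ hlz
  have heX := Int.mul_ediv_add_emod ((A : ℤ) - (C : ℤ)) (ℓ : ℤ)
  have heY := Int.mul_ediv_add_emod ((B : ℤ) - (C : ℤ)) (ℓ : ℤ)
  rw [← hXdef] at heX
  rw [← hYdef] at heY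
  set qX := ((A : ℤ) - (C : ℤ)) / (ℓ : ℤ) with hqXdef
  set qY := ((B : ℤ) - (C : ℤ)) / (ℓ : ℤ) with hqYdef
  have hkey : X - Y = ((A : ℤ) - (B : ℤ)) + (ℓ : ℤ) * (qY - qX) := by
    have : (ℓ:ℤ) * (qY - qX) = (ℓ:ℤ) * qY - (ℓ:ℤ) * qX := by ring
    omega
  have hm1 : (ℓ : ℤ) * (qY - qX) < (ℓ : ℤ) * 2 := by
    rcases abs_cases ((A : ℤ) - (B : ℤ)) with ⟨habs, _⟩ | ⟨habs, _⟩ <;> omega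
  have hm2 : (ℓ : ℤ) * (-2) < (ℓ : ℤ) * (qY - qX) := by
    rcases abs_cases ((A : ℤ) - (B : ℤ)) with ⟨habs, _⟩ | ⟨habs, _⟩ <;> omega
  have hm1' : qY - qX < 2 := lt_of_mul_lt_mul_left hm1 (le_of_lt hlz)
  have hm2' : -2 < qY - qX := lt_of_mul_lt_mul_left hm2 (le_of_lt hlz)
  have hm0 : qY - qX = 0 ∨ qY - qX = 1 ∨ qY - qX = -1 := by omega
  rcases abs_cases (X - Y) with ⟨habs', _⟩ | ⟨habs', _⟩ <;> rw [habs'] <;>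
    rcases abs_cases ((A : ℤ) - (B : ℤ)) with ⟨habs, _⟩ | ⟨habs, _⟩ <;>
    rcases hm0 with hm | hm | hm <;> rw [hm] at hkey <;> omega

lemma gap_lemma (p : ℕ) : ∀ (n : ℕ) (T : Finset ℕ), T.card = n →
    (∀ a ∈ T, ∀ b ∈ T, a < b → a + p ≤ b) →
    ∀ (hT : T.Nonempty), T.min' hT + (T.card - 1) * p ≤ T.max' hT := by
  intro n
  induction n with
  | zero =>
    intro T hc _ hT
    have := Finset.card_pos.mpr hT
    omega
  | succ n ih =>
    intro T hc hsep hT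
    by_cases h1 : T.card ≤ 1
    · have hc1 : T.card - 1 = 0 := by omega
      rw [hc1, Nat.zero_mul, Nat.add_zero]
      exact Finset.min'_le _ _ (T.max'_mem hT)
    · have hlt : 1 < T.card := by omega
      have hMmem := T.max'_mem hT
      set M := T.max' hT with hMdef
      set T' := T.erase M with hT'def
      have hcard' : T'.card = n := by
        rw [hT'def, Finset.card_erase_of_mem hMmem]; omega
      have hT'ne : T'.Nonempty := Finset.card_pos.mp (by omega)
      have hsub : T' ⊆ T := Finset.erase_subset _ _
      have hminne : T.min' hT ≠ M := ne_of_lt (Finset.min'_lt_max'_of_card T hlt)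
      have hminmem : T.min' hT ∈ T' := Finset.mem_erase.mpr ⟨hminne, T.min'_mem hT⟩
      have hmineq : T'.min' hT'ne = T.min' hT := by
        apply le_antisymm
        · exact Finset.min'_le _ _ hminmem
        · exact Finset.min'_le _ _ (hsub (T'.min'_mem hT'ne))
      have hmax'T' : T'.max' hT'ne + p ≤ M := by
        have hmem' : T'.max' hT'ne ∈ T' := T'.max'_mem hT'ne
        have hmemT : T'.max' hT'ne ∈ T := hsub hmem'
        have hneM : T'.max' hT'ne ≠ M := (Finset.mem_erase.mp hmem').1
        have hleM : T'.max' hT'ne ≤ M := Finset.le_max' _ _ hmemT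
        exact hsep _ hmemT _ hMmem (lt_of_le_of_ne hleM hneM)
      have ihh := ih T' hcard' (fun a ha b hb hab => hsep a (hsub ha) b (hsub hb) hab) hT'ne
      rw [hmineq, hcard'] at ihh
      obtain ⟨k, rfl⟩ : ∃ k, n = k + 1 := ⟨n - 1, by omega⟩
      have e1 : (T.card - 1) * p = (k + 1) * p := by rw [hc]; congr 1
      have e2 : (k + 1 - 1) * p = k * p := by norm_num
      rw [e2] at ihh
      have : (k + 1) * p = k * p + p := by ring
      omega

lemma lower_bound {V : Type} [Fintype V] (G : SimpleGraph V) [DecidableRel G.Adj]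
    (hne : Nonempty V) {h p ℓ : ℕ} (hp : 1 ≤ p) (hD : 3 ≤ G.maxDegree)
    (hph : G.maxDegree * p ≤ h) (hl0 : 0 < ℓ) {f : V → ℕ} (hf : IsCLabelling G h p ℓ f) :
    2 * h + (G.maxDegree - 1) * p ≤ ℓ := by
  classical
  obtain ⟨u, hu⟩ := G.exists_maximal_degree_vertex
  obtain ⟨hspan, hd1, hd23⟩ := hf
  have hlz : (0 : ℤ) < (ℓ : ℤ) := by exact_mod_cast hl0
  have hph' : p ≤ h := by
    calc p = 1 * p := by ring
    _ ≤ G.maxDegree * p := Nat.mul_le_mul_right _ (by omega)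
    _ ≤ h := hph
  -- the shifted coordinates of the neighbours
  set x : V → ℤ := fun v => ((f v : ℤ) - (f u : ℤ)) % (ℓ : ℤ) with hxdef
  have hwin : ∀ v ∈ G.neighborFinset u, (h : ℤ) ≤ x v ∧ x v ≤ (ℓ : ℤ) - h := by
    intro v hv
    have hadj : G.Adj u v := (mem_neighborFinset G u v).mp hv
    have hcyc := hd1 u v (dist_eq_one_iff_adj.mpr hadj)
    exact window hl0 (hspan u) (hspan v) hcyc
  have hpair : ∀ v ∈ G.neighborFinset u, ∀ w ∈ G.neighborFinset u, v ≠ w →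
      (p : ℤ) ≤ |x v - x w| := by
    intro v hv w hw hvw
    have hadjv : G.Adj u v := (mem_neighborFinset G u v).mp hv
    have hadjw : G.Adj u w := (mem_neighborFinset G u w).mp hw
    have hdle : G.dist v w ≤ 2 := by
      have := SimpleGraph.dist_le (Walk.cons hadjv.symm (Walk.cons hadjw Walk.nil))
      simpa using this
    have hdne : G.dist v w ≠ 0 := by
      rw [SimpleGraph.dist_ne_zero_iff_ne_and_reachable]
      exact ⟨hvw, (Walk.cons hadjv.symm (Walk.cons hadjw Walk.nil)).reachable⟩
    have hcyc : (p : ℤ) ≤ cycDist ℓ (f v) (f w) := by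
      rcases (by omega : G.dist v w = 1 ∨ G.dist v w = 2) with hd | hd
      · have := hd1 v w hd
        have hhp : (p : ℤ) ≤ (h : ℤ) := by exact_mod_cast hph'
        omega
      · exact hd23 v w (Or.inl hd)
    exact pair_sep hl0 (hspan v) (hspan w) (hspan u) hcyc
  set T : Finset ℕ := (G.neighborFinset u).image (fun v => (x v).toNat) with hTdef
  have hinj : Set.InjOn (fun v => (x v).toNat) (G.neighborFinset u : Set V) := by
    intro v hv w hw heq
    by_contra hvw
    have hp' := hpair v (by exact_mod_cast hv) w (by exact_mod_cast hw) hvw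
    have hx0v : 0 ≤ x v := Int.emod_nonneg _ (by omega)
    have hx0w : 0 ≤ x w := Int.emod_nonneg _ (by omega)
    simp only at heq
    have : x v = x w := by omega
    rw [this] at hp'
    simp at hp'
    omega
  have hcardT : T.card = G.maxDegree := by
    rw [hTdef, Finset.card_image_of_injOn hinj, card_neighborFinset_eq_degree, ← hu]
  have hTne : T.Nonempty := Finset.card_pos.mp (by omega)
  have hmemT : ∀ m ∈ T, h ≤ m ∧ (m : ℤ) ≤ (ℓ : ℤ) - h := by
    intro m hm
    obtain ⟨v, hv, rfl⟩ := Finset.mem_image.mp hm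
    obtain ⟨h1, h2⟩ := hwin v hv
    have hx0 : 0 ≤ x v := Int.emod_nonneg _ (by omega)
    constructor
    · omega
    · omega
  have hsep : ∀ a ∈ T, ∀ b ∈ T, a < b → a + p ≤ b := by
    intro a ha b hb hab
    obtain ⟨v, hv, rfl⟩ := Finset.mem_image.mp ha
    obtain ⟨w, hw, rfl⟩ := Finset.mem_image.mp hb
    have hvw : v ≠ w := by
      intro hcon; rw [hcon] at hab; omega
    have hp' := hpair v hv w hw hvw
    have hx0v : 0 ≤ x v := Int.emod_nonneg _ (by omega)
    have hx0w : 0 ≤ x w := Int.emod_nonneg _ (by omega)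
    rcases abs_cases (x v - x w) with ⟨habs, _⟩ | ⟨habs, _⟩ <;> rw [habs] at hp' <;> omega
  have hgap := gap_lemma p T.card T rfl hsep hTne
  rw [hcardT] at hgap
  obtain ⟨hmin1, hmin2⟩ := hmemT _ (T.min'_mem hTne)
  obtain ⟨hmax1, hmax2⟩ := hmemT _ (T.max'_mem hTne)
  have hfin : T.max' hTne + h ≤ ℓ := by omega
  generalize hgg : (G.maxDegree - 1) * p = gg at hgap ⊢
  omega

end Stmt10Aux

theorem stmt10 {V : Type} [Fintype V] (G : SimpleGraph V) [DecidableRel G.Adj]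
    (hT : G.IsTree) (hdiam : ∃ u v : V, 3 ≤ G.dist u v) (hD : 3 ≤ G.maxDegree)
    (h p : ℕ) (hp : 1 ≤ p) (hh : 1 ≤ h) (hph : G.maxDegree * p ≤ h) :
    (∃ f : V → ℕ, IsElegantCLabelling G h p (2 * h + G.maxDegree * p - 1) f) ∧
    2 * h + (G.maxDegree - 1) * p ≤ sigmaNum G h p ∧
    sigmaNum G h p ≤ sigmaStar G h p ∧
    sigmaStar G h p ≤ 2 * h + G.maxDegree * p - 1 := by
  obtain ⟨u0, v0, hd3⟩ := hdiam
  have hne : Nonempty V := ⟨u0⟩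
  have hDp : 3 ≤ G.maxDegree * p := by
    calc 3 ≤ G.maxDegree := hD
    _ = G.maxDegree * 1 := by ring
    _ ≤ G.maxDegree * p := Nat.mul_le_mul_left _ hp
  have hh3 : 3 ≤ h := le_trans hDp hph
  have hL0 : 0 < 2 * h + G.maxDegree * p - 1 := by omega
  obtain ⟨f0, hf0⟩ := Stmt10Aux.exists_elegant G hT hne h p hp hD hph
  refine ⟨⟨f0, hf0⟩, ?_, ?_, ?_⟩
  · have hSne : {ℓ : ℕ | 0 < ℓ ∧ ∃ f : V → ℕ, IsCLabelling G h p ℓ f}.Nonempty :=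
      ⟨2 * h + G.maxDegree * p - 1, hL0, f0, hf0.1⟩
    have hmem := Nat.sInf_mem hSne
    simp only [Set.mem_setOf_eq] at hmem
    obtain ⟨hpos, f, hfc⟩ := hmem
    exact Stmt10Aux.lower_bound G hne hp hD hph hpos hfc
  · have hSne : {ℓ : ℕ | 0 < ℓ ∧ ∃ f : V → ℕ, IsElegantCLabelling G h p ℓ f}.Nonempty :=
      ⟨2 * h + G.maxDegree * p - 1, hL0, f0, hf0⟩
    have hmem := Nat.sInf_mem hSne
    simp only [Set.mem_setOf_eq] at hmem
    obtain ⟨hpos, f, hfe⟩ := hmem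
    exact Nat.sInf_le ⟨hpos, f, hfe.1⟩
  · exact Nat.sInf_le ⟨hL0, f0, hf0⟩
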